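/- There exist ξ₁ > 0 and C > 0 such that for all ξ ≥ ξ₁: c₀(ξ) := 1/W(f₊(·,ξ), φ(·,ξ)) = 1 + E₁(ξ) with |E₁(ξ)| ≤ C ξ^{−1/2}, and ρ(ξ) := (1/π) Im[c₀(ξ) W(θ(·,ξ), f₊(·,ξ))] = (1/π) ξ^{1/2}(1 + E₂(ξ)) with |E₂(ξ)| ≤ C ξ^{−1/2}. -/

import Mathlib

set_option maxHeartbeats 1000000


noncomputable section

open Real Complex Filter Set

/-- Japanese bracket `⟨x⟩ = (1+x²)^{1/2}`. -/
def jap (x : ℝ) : ℝ := Real.sqrt (1 + x ^ 2)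

/-- The ground state `W(R) = (1+R²/3)^{-1/2}`. -/
def W (R : ℝ) : ℝ := (Real.sqrt (1 + R ^ 2 / 3))⁻¹

/-- The free oscillatory factor `e^{i√ξ R}`. -/
def osc (ξ R : ℝ) : ℂ := Complex.exp (Complex.I * Complex.ofReal (Real.sqrt ξ * R))

/-- The Wronskian `W(g,h)(R) = g(R)h'(R) - g'(R)h(R)` of two complex functions. -/
def Wron (g h : ℝ → ℂ) (R : ℝ) : ℂ := g R * deriv h R - deriv g R * h R

lemma wron_const (g h : ℝ → ℂ) (c : ℝ → ℂ)
    (hg : ContDiff ℝ 2 g) (hh : ContDiff ℝ 2 h)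
    (hgo : ∀ R > (0:ℝ), deriv (deriv g) R = c R * g R)
    (hho : ∀ R > (0:ℝ), deriv (deriv h) R = c R * h R)
    (R : ℝ) (hR : 0 < R) : Wron g h R = Wron g h 0 := by
  have hg2 : ContDiff ℝ ((1:ℕ) + 1) g := by exact_mod_cast hg
  have hh2 : ContDiff ℝ ((1:ℕ) + 1) h := by exact_mod_cast hh
  have hg1 : Differentiable ℝ g := hg.differentiable two_ne_zero
  have hh1 : Differentiable ℝ h := hh.differentiable two_ne_zero
  have hg' : Differentiable ℝ (deriv g) :=
    ((contDiff_succ_iff_deriv.mp hg2).2.2).differentiable (by simp)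
  have hh' : Differentiable ℝ (deriv h) :=
    ((contDiff_succ_iff_deriv.mp hh2).2.2).differentiable (by simp)
  have key : ∀ x > (0:ℝ), HasDerivAt (Wron g h) 0 x := by
    intro x hx
    have Hg : HasDerivAt g (deriv g x) x := (hg1 x).hasDerivAt
    have Hh : HasDerivAt h (deriv h x) x := (hh1 x).hasDerivAt
    have Hg' : HasDerivAt (deriv g) (deriv (deriv g) x) x := (hg' x).hasDerivAt
    have Hh' : HasDerivAt (deriv h) (deriv (deriv h) x) x := (hh' x).hasDerivAt
    have := (Hg.mul Hh').sub (Hg'.mul Hh)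
    refine HasDerivAt.congr_deriv (f := Wron g h) this ?_
    rw [hgo x hx, hho x hx]; ring
  have contW : Continuous (Wron g h) :=
    (hg1.continuous.mul (hh.continuous_deriv one_le_two)).sub
      ((hg.continuous_deriv one_le_two).mul hh1.continuous)
  have const2 : ∀ ε, 0 < ε → ε ≤ R → Wron g h R = Wron g h ε := by
    intro ε hε hεR
    have := constant_of_has_deriv_right_zero (f := Wron g h) (a := ε) (b := R)
      (contW.continuousOn)
      (fun x hx => ((key x (lt_of_lt_of_le hε hx.1)).hasDerivWithinAt))
    exact this R ⟨hεR, le_rfl⟩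
  have tend1 : Tendsto (Wron g h) (nhdsWithin 0 (Ioi 0)) (nhds (Wron g h 0)) :=
    (contW.tendsto 0).mono_left nhdsWithin_le_nhds
  have tend2 : Tendsto (Wron g h) (nhdsWithin 0 (Ioi 0)) (nhds (Wron g h R)) := by
    apply Tendsto.congr' _ tendsto_const_nhds
    filter_upwards [Ioo_mem_nhdsGT_of_mem (Set.mem_Ico.mpr ⟨le_refl 0, hR⟩)] with x hx
    exact const2 x hx.1 hx.2.le
  exact tendsto_nhds_unique tend2 tend1

lemma ofReal_deriv_eq (φ : ℝ → ℝ) (h : ContDiff ℝ 2 φ) (x : ℝ) :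
    deriv (fun y => ((φ y : ℝ) : ℂ)) x = Complex.ofReal (deriv φ x) :=
  ((h.differentiable two_ne_zero x).hasDerivAt.ofReal_comp).deriv

lemma ofReal_deriv2_eq (φ : ℝ → ℝ) (h : ContDiff ℝ 2 φ) (x : ℝ) :
    deriv (deriv (fun y => ((φ y : ℝ) : ℂ))) x = Complex.ofReal (deriv (deriv φ) x) := by
  have h2 : ContDiff ℝ ((1:ℕ) + 1) φ := by exact_mod_cast h
  have hd : Differentiable ℝ (deriv φ) :=
    ((contDiff_succ_iff_deriv.mp h2).2.2).differentiable (by simp)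
  have e : deriv (fun y => ((φ y : ℝ) : ℂ)) = fun y => Complex.ofReal (deriv φ y) :=
    funext (ofReal_deriv_eq φ h)
  rw [e]
  exact ((hd x).hasDerivAt.ofReal_comp).deriv

lemma ofReal_contDiff (φ : ℝ → ℝ) (h : ContDiff ℝ 2 φ) :
    ContDiff ℝ 2 (fun y => ((φ y : ℝ) : ℂ)) :=
  (Complex.ofRealCLM : ℝ →L[ℝ] ℂ).contDiff.comp h

lemma osc_eq (ξ y : ℝ) : osc ξ y = Complex.exp ((Complex.I * (Real.sqrt ξ : ℂ)) * (y : ℂ)) := by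
  simp [osc, Complex.ofReal_mul, mul_assoc]

lemma norm_osc (ξ y : ℝ) : ‖Complex.exp ((Complex.I * (Real.sqrt ξ : ℂ)) * (y : ℂ))‖ = 1 := by
  simp [Complex.norm_exp]

lemma exp_hasDerivAt (a : ℂ) (x : ℝ) :
    HasDerivAt (fun R : ℝ => Complex.exp (a * R)) (a * Complex.exp (a * x)) x := by
  have l1 : HasDerivAt (fun R : ℝ => a * (R : ℂ)) a x := by
    simpa using ((hasDerivAt_id x).ofReal_comp).const_mul a
  exact ((Complex.hasDerivAt_exp (a * x)).comp x l1).congr_deriv (mul_comm _ _)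


/-- **Lemma 3.6**: asymptotics of the spectral measure as `ξ → ∞`.
If `φ(·,ξ), θ(·,ξ)` are the fundamental system of `-f'' - 5W⁴f = ξf` normalized at `R = 0`
and `f₊(·,ξ)` is the large-energy Jost function `e^{i√ξR}(1 + b(R,ξ))` on `[0,∞)`, then
`c₀(ξ) = 1/W(f₊(·,ξ),φ(·,ξ)) = 1 + O(ξ^{-1/2})` and
`ρ(ξ) = (1/π)Im[c₀(ξ)W(θ(·,ξ),f₊(·,ξ))] = (1/π)ξ^{1/2}(1+O(ξ^{-1/2}))`. -/
theorem spectral_measure_large_energy (ξ₁' : ℝ) (hξ₁' : 0 < ξ₁')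
    (φ θ : ℝ → ℝ → ℝ) (f : ℝ → ℝ → ℂ) (b : ℝ → ℝ → ℂ)
    (hφreg : ∀ ξ : ℝ, ξ₁' ≤ ξ → ContDiff ℝ 2 (φ ξ) ∧ ContDiff ℝ 2 (θ ξ))
    (hφode : ∀ ξ : ℝ, ξ₁' ≤ ξ → ∀ R > (0 : ℝ),
      -(deriv (deriv (φ ξ)) R) - 5 * W R ^ 4 * φ ξ R = ξ * φ ξ R ∧
      -(deriv (deriv (θ ξ)) R) - 5 * W R ^ 4 * θ ξ R = ξ * θ ξ R)
    (hφic : ∀ ξ : ℝ, ξ₁' ≤ ξ →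
      φ ξ 0 = 0 ∧ deriv (φ ξ) 0 = 1 ∧ θ ξ 0 = 1 ∧ deriv (θ ξ) 0 = 0)
    (hfreg : ∀ ξ : ℝ, ξ₁' ≤ ξ → ContDiff ℝ 2 (f ξ))
    (hfode : ∀ ξ : ℝ, ξ₁' ≤ ξ → ∀ R > (0 : ℝ),
      -(deriv (deriv (f ξ)) R) - 5 * (W R : ℂ) ^ 4 * f ξ R = (ξ : ℂ) * f ξ R)
    (hform : ∀ ξ : ℝ, ξ₁' ≤ ξ → ∀ R : ℝ, 0 ≤ R → f ξ R = osc ξ R * (1 + b R ξ))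
    (hb : ∀ k l : ℕ, ∃ C : ℝ, ∀ ξ : ℝ, ξ₁' ≤ ξ → ∀ R : ℝ, 0 ≤ R →
      ‖iteratedDeriv l (fun ξ' => iteratedDeriv k (fun R' => b R' ξ') R) ξ‖
        ≤ C * jap R ^ (-(3 : ℝ) - (k : ℝ)) * ξ ^ (-(1 : ℝ) / 2 - (l : ℝ))) :
    ∃ ξ₁ : ℝ, ξ₁' ≤ ξ₁ ∧ ∃ C > (0 : ℝ), ∃ E₁ : ℝ → ℂ, ∃ E₂ : ℝ → ℝ,
      ∀ ξ : ℝ, ξ₁ ≤ ξ →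
        -- `c₀(ξ) = 1/W(f₊,φ) = 1 + O(ξ^{-1/2})`
        (∀ R > (0 : ℝ),
          (Wron (f ξ) (fun R' => ((φ ξ R' : ℝ) : ℂ)) R)⁻¹ = 1 + E₁ ξ) ∧
        ‖E₁ ξ‖ ≤ C * ξ ^ (-(1 : ℝ) / 2) ∧
        -- `ρ(ξ) = (1/π) Im[c₀(ξ) W(θ,f₊)] = (1/π) ξ^{1/2}(1+O(ξ^{-1/2}))`
        (∀ R > (0 : ℝ),
          (1 / π) * ((Wron (f ξ) (fun R' => ((φ ξ R' : ℝ) : ℂ)) 1)⁻¹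
              * Wron (fun R' => ((θ ξ R' : ℝ) : ℂ)) (f ξ) R).im
            = (1 / π) * ξ ^ ((1 : ℝ) / 2) * (1 + E₂ ξ)) ∧
        |E₂ ξ| ≤ C * ξ ^ (-(1 : ℝ) / 2) := by
  obtain ⟨C₀, hC₀⟩ := hb 0 0
  obtain ⟨C₁, hC₁⟩ := hb 1 0
  set D : ℝ := max C₀ 0 + max C₁ 0 + 1 with hDdef
  have hD : 0 < D := by positivity
  have hC₀D : C₀ ≤ D := by
    have := le_max_left C₀ 0; have := le_max_right C₁ 0; linarith
  have hC₁D : C₁ ≤ D := by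
    have := le_max_left C₁ 0; have := le_max_right C₀ 0; linarith
  refine ⟨max ξ₁' (1 + 4 * D ^ 2), le_max_left _ _, 4 * D, by positivity,
    (fun ξ => (1 + b 0 ξ)⁻¹ - 1),
    (fun ξ => ξ ^ (-(1:ℝ)/2) *
      ((1 + b 0 ξ)⁻¹ * (deriv (f ξ) 0 - Complex.I * (Real.sqrt ξ : ℂ) * f ξ 0)).im),
    ?_⟩
  intro ξ hξ
  have hξ' : ξ₁' ≤ ξ := le_trans (le_max_left _ _) hξ
  have hξbig : 1 + 4 * D ^ 2 ≤ ξ := le_trans (le_max_right _ _) hξ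
  have hξ1 : 1 ≤ ξ := by nlinarith
  have hξpos : 0 < ξ := by linarith
  have hsq : 2 * D ≤ Real.sqrt ξ := by
    nlinarith [Real.sq_sqrt hξpos.le, Real.sqrt_nonneg ξ, Real.sqrt_le_sqrt hξ1]
  have hsqpos : 0 < Real.sqrt ξ := Real.sqrt_pos.mpr hξpos
  have hrw : ξ ^ (-(1:ℝ)/2) = (Real.sqrt ξ)⁻¹ := by
    rw [Real.sqrt_eq_rpow, ← Real.rpow_neg hξpos.le]; norm_num
  have hrpos : 0 < ξ ^ (-(1:ℝ)/2) := Real.rpow_pos_of_pos hξpos _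
  have hhalf : D * ξ ^ (-(1:ℝ)/2) ≤ 1/2 := by
    rw [hrw]
    have h1 : (Real.sqrt ξ)⁻¹ ≤ (2 * D)⁻¹ := by
      apply inv_anti₀ (by positivity) hsq
    calc D * (Real.sqrt ξ)⁻¹ ≤ D * (2 * D)⁻¹ :=
          mul_le_mul_of_nonneg_left h1 hD.le
      _ = 1/2 := by field_simp
  -- bound on b 0 ξ
  have hb0 : ‖b 0 ξ‖ ≤ D * ξ ^ (-(1:ℝ)/2) := by
    have h := hC₀ ξ hξ' 0 le_rfl
    have hjap : jap 0 = 1 := by simp [jap]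
    simp only [iteratedDeriv_zero, hjap, Nat.cast_zero, sub_zero, Real.one_rpow,
      mul_one, one_mul] at h
    calc ‖b 0 ξ‖ ≤ C₀ * ξ ^ (-(1:ℝ)/2) := h
      _ ≤ D * ξ ^ (-(1:ℝ)/2) := mul_le_mul_of_nonneg_right hC₀D hrpos.le
  have hbhalf : ‖b 0 ξ‖ ≤ 1/2 := le_trans hb0 hhalf
  have hge : 1/2 ≤ ‖(1:ℂ) + b 0 ξ‖ := by
    have h1 : (1:ℝ) ≤ ‖(1:ℂ) + b 0 ξ‖ + ‖b 0 ξ‖ := by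
      calc (1:ℝ) = ‖((1:ℂ) + b 0 ξ) - b 0 ξ‖ := by norm_num
        _ ≤ _ := norm_sub_le _ _
    linarith
  have hne : (1:ℂ) + b 0 ξ ≠ 0 := by
    intro h0; rw [h0] at hge; simp at hge; linarith
  have hinv : ‖((1:ℂ) + b 0 ξ)⁻¹‖ ≤ 2 := by
    rw [norm_inv]
    calc ‖(1:ℂ) + b 0 ξ‖⁻¹ ≤ ((1:ℝ)/2)⁻¹ := inv_anti₀ (by norm_num) hge
      _ = 2 := by norm_num
  -- regularity
  have hφ2 : ContDiff ℝ 2 (φ ξ) := (hφreg ξ hξ').1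
  have hθ2 : ContDiff ℝ 2 (θ ξ) := (hφreg ξ hξ').2
  have hf2 : ContDiff ℝ 2 (f ξ) := hfreg ξ hξ'
  set φc : ℝ → ℂ := fun R' => ((φ ξ R' : ℝ) : ℂ) with hφc
  set θc : ℝ → ℂ := fun R' => ((θ ξ R' : ℝ) : ℂ) with hθc
  set cf : ℝ → ℂ := fun R => -(5 * ((W R : ℝ) : ℂ) ^ 4 + (ξ : ℂ)) with hcf
  -- ODEs in normalized form
  have fode : ∀ R > (0:ℝ), deriv (deriv (f ξ)) R = cf R * f ξ R := by
    intro R hR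
    have h := hfode ξ hξ' R hR
    simp only [hcf]
    linear_combination -h
  have φode : ∀ R > (0:ℝ), deriv (deriv φc) R = cf R * φc R := by
    intro R hR
    have h := (hφode ξ hξ' R hR).1
    rw [ofReal_deriv2_eq _ hφ2]
    have hr : deriv (deriv (φ ξ)) R = -(5 * W R ^ 4 + ξ) * φ ξ R := by linarith
    rw [hr]; simp only [hφc, hcf]; push_cast; ring
  have θode : ∀ R > (0:ℝ), deriv (deriv θc) R = cf R * θc R := by
    intro R hR
    have h := (hφode ξ hξ' R hR).2
    rw [ofReal_deriv2_eq _ hθ2]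
    have hr : deriv (deriv (θ ξ)) R = -(5 * W R ^ 4 + ξ) * θ ξ R := by linarith
    rw [hr]; simp only [hθc, hcf]; push_cast; ring
  -- Wronskians are constant
  have W1 : ∀ R > (0:ℝ), Wron (f ξ) φc R = Wron (f ξ) φc 0 :=
    fun R hR => wron_const (f ξ) φc cf hf2 (ofReal_contDiff _ hφ2) fode φode R hR
  have W2 : ∀ R > (0:ℝ), Wron θc (f ξ) R = Wron θc (f ξ) 0 :=
    fun R hR => wron_const θc (f ξ) cf (ofReal_contDiff _ hθ2) hf2 θode fode R hR
  -- values at 0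
  have hic := hφic ξ hξ'
  have f0 : f ξ 0 = 1 + b 0 ξ := by
    have := hform ξ hξ' 0 le_rfl
    simpa [osc] using this
  have W1v : Wron (f ξ) φc 0 = 1 + b 0 ξ := by
    simp only [Wron, hφc, ofReal_deriv_eq _ hφ2, hic.1, hic.2.1, f0]
    simp
  have W2v : Wron θc (f ξ) 0 = deriv (f ξ) 0 := by
    simp only [Wron, hθc, ofReal_deriv_eq _ hθ2, hic.2.2.1, hic.2.2.2]
    simp
  -- bound on β := deriv f 0 - i√ξ f 0
  set a : ℂ := Complex.I * (Real.sqrt ξ : ℂ) with ha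
  set g : ℝ → ℂ := fun x => deriv (f ξ) x - a * f ξ x with hg
  have fdiff : Differentiable ℝ (f ξ) := hf2.differentiable two_ne_zero
  have gcont : Continuous g :=
    (hf2.continuous_deriv one_le_two).sub (continuous_const.mul fdiff.continuous)
  have gbound : ∀ x > (0:ℝ), ‖g x‖ ≤ D * ξ ^ (-(1:ℝ)/2) := by
    intro x hx
    -- b is differentiable at x with derivative exp(-a x) * g x
    have hbx : (fun R => b R ξ) =ᶠ[nhds x] (fun R => f ξ R * Complex.exp (-a * R) - 1) := by
      filter_upwards [Ioi_mem_nhds hx] with y hy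
      have hf := hform ξ hξ' y (le_of_lt hy)
      rw [hf, osc_eq, ← ha]
      have h1 : Complex.exp (a * y) * Complex.exp (-a * y) = 1 := by
        rw [← Complex.exp_add]; norm_num
      linear_combination (-(1 + b y ξ)) * h1
    have hexp : HasDerivAt (fun R : ℝ => Complex.exp (-a * R))
        (-a * Complex.exp (-a * x)) x := exp_hasDerivAt (-a) x
    have hu : HasDerivAt (fun R : ℝ => f ξ R * Complex.exp (-a * R) - 1)
        (Complex.exp (-a * x) * g x) x := by
      have := ((fdiff x).hasDerivAt.mul hexp).sub_const 1
      refine HasDerivAt.congr_deriv this ?_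
      simp only [hg]; ring
    have db : deriv (fun R => b R ξ) x = Complex.exp (-a * x) * g x := by
      rw [Filter.EventuallyEq.deriv_eq hbx]
      exact hu.deriv
    have hbd := hC₁ ξ hξ' x hx.le
    simp only [iteratedDeriv_zero, iteratedDeriv_one, Nat.cast_zero, Nat.cast_one,
      sub_zero] at hbd
    rw [db] at hbd
    have hnorm : ‖Complex.exp (-a * x) * g x‖ = ‖g x‖ := by
      rw [norm_mul]
      have : ‖Complex.exp (-a * (x:ℂ))‖ = 1 := by
        simp [ha, Complex.norm_exp]
      rw [this, one_mul]
    rw [hnorm] at hbd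
    have hjap1 : (1:ℝ) ≤ jap x := by
      simp only [jap]
      nlinarith [Real.sq_sqrt (show (0:ℝ) ≤ 1 + x^2 by positivity),
        Real.sqrt_nonneg (1 + x^2)]
    have hjapB : jap x ^ (-(3:ℝ) - 1) ≤ 1 :=
      Real.rpow_le_one_of_one_le_of_nonpos hjap1 (by norm_num)
    have hjap0 : (0:ℝ) ≤ jap x ^ (-(3:ℝ) - 1) := Real.rpow_nonneg (by positivity) _
    calc ‖g x‖ ≤ C₁ * jap x ^ (-(3:ℝ) - 1) * ξ ^ (-(1:ℝ)/2) := hbd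
      _ ≤ D * ξ ^ (-(1:ℝ)/2) := by
          apply mul_le_mul_of_nonneg_right _ hrpos.le
          nlinarith [le_max_left C₁ 0, le_max_right C₁ 0]
  have gtend : Tendsto g (nhdsWithin 0 (Ioi 0)) (nhds (g 0)) :=
    (gcont.tendsto 0).mono_left nhdsWithin_le_nhds
  have hβ : ‖g 0‖ ≤ D * ξ ^ (-(1:ℝ)/2) := by
    apply le_of_tendsto gtend.norm
    filter_upwards [self_mem_nhdsWithin] with x hx
    exact gbound x hx
  -- conclusion
  have conc1 : ∀ R > (0:ℝ),
      (Wron (f ξ) φc R)⁻¹ = 1 + ((1 + b 0 ξ)⁻¹ - 1) := by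
    intro R hR
    rw [W1 R hR, W1v]; ring
  have hE1bd : ‖(1 + b 0 ξ)⁻¹ - 1‖ ≤ 4 * D * ξ ^ (-(1:ℝ)/2) := by
    have heq : (1 + b 0 ξ)⁻¹ - 1 = (1 + b 0 ξ)⁻¹ * (-(b 0 ξ)) := by
      field_simp; ring
    rw [heq, norm_mul, norm_neg]
    calc ‖(1 + b 0 ξ)⁻¹‖ * ‖b 0 ξ‖ ≤ 2 * (D * ξ ^ (-(1:ℝ)/2)) :=
        mul_le_mul hinv hb0 (norm_nonneg _) (by norm_num)
      _ ≤ 4 * D * ξ ^ (-(1:ℝ)/2) := by nlinarith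
  set z : ℂ := (1 + b 0 ξ)⁻¹ * (deriv (f ξ) 0 - Complex.I * (Real.sqrt ξ : ℂ) * f ξ 0)
    with hz
  have hznorm : ‖z‖ ≤ 2 * (D * ξ ^ (-(1:ℝ)/2)) := by
    rw [hz, norm_mul]
    exact mul_le_mul hinv hβ (norm_nonneg _) (by norm_num)
  have conc2 : ∀ R > (0:ℝ),
      (1 / π) * ((Wron (f ξ) φc 1)⁻¹ * Wron θc (f ξ) R).im
        = (1 / π) * ξ ^ ((1:ℝ)/2) * (1 + ξ ^ (-(1:ℝ)/2) * z.im) := by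
    intro R hR
    rw [W2 R hR, W2v, W1 1 one_pos, W1v]
    have hcancel : ((1:ℂ) + b 0 ξ)⁻¹ * (1 + b 0 ξ) = 1 := inv_mul_cancel₀ hne
    have key : (1 + b 0 ξ)⁻¹ * deriv (f ξ) 0 = Complex.I * (Real.sqrt ξ : ℂ) + z := by
      rw [hz, f0]
      linear_combination (Complex.I * ((Real.sqrt ξ : ℝ) : ℂ)) * hcancel
    rw [key]
    have him : (Complex.I * (Real.sqrt ξ : ℂ) + z).im = Real.sqrt ξ + z.im := by
      simp
    rw [him]
    have hs : Real.sqrt ξ = ξ ^ ((1:ℝ)/2) := by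
      rw [Real.sqrt_eq_rpow]
    have hmul : ξ ^ ((1:ℝ)/2) * ξ ^ (-(1:ℝ)/2) = 1 := by
      rw [← Real.rpow_add hξpos]; norm_num
    rw [hs]
    have : ξ ^ ((1:ℝ)/2) * (1 + ξ ^ (-(1:ℝ)/2) * z.im)
        = ξ ^ ((1:ℝ)/2) + z.im := by
      linear_combination z.im * hmul
    rw [mul_assoc, this]
  have hE2bd : |ξ ^ (-(1:ℝ)/2) * z.im| ≤ 4 * D * ξ ^ (-(1:ℝ)/2) := by
    have h1 : |z.im| ≤ ‖z‖ := Complex.abs_im_le_norm z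
    have hle1 : ξ ^ (-(1:ℝ)/2) ≤ 1 := by
      apply Real.rpow_le_one_of_one_le_of_nonpos hξ1 (by norm_num)
    rw [abs_mul, abs_of_pos hrpos]
    have s1 : ξ ^ (-(1:ℝ)/2) * |z.im| ≤ 1 * (2 * (D * ξ ^ (-(1:ℝ)/2))) :=
      mul_le_mul hle1 (h1.trans hznorm) (abs_nonneg _) (by norm_num)
    nlinarith [s1]
  exact ⟨conc1, hE1bd, conc2, hE2bd⟩

end
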